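/- Let a countable amenable discrete group Γ act on a compact metrizable group X by continuous automorphisms. Then: (1) IE(X) is a closed Γ-invariant normal subgroup of X; (2) for every k ∈ ℕ, the set IE_k(X) of IE-tuples of length k is a closed Γ-invariant subgroup of the group X^k (with the product Γ-action), and IE_k(X) = {(x₁y, …, x_ky) : x₁, …, x_k ∈ IE(X), y ∈ X} = {(yx₁, …, yx_k) : x₁, …, x_k ∈ IE(X), y ∈ X}. -/

import Mathlib

/-!
STATEMENT 17: For an action of a countable amenable group `Γ` on a compact metrizable
group `X` by continuous automorphisms: (1) `IE(X)` is a closed `Γ`-invariant normal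
subgroup of `X`; (2) for every `k`, `IE_k(X)` is a closed `Γ`-invariant subgroup of `X^k`
and equals `{(x₁y, …, x_ky)} = {(yx₁, …, yx_k)}` with `x_i ∈ IE(X)`, `y ∈ X`.
-/

open Topology
open scoped Pointwise

namespace Stmt17

variable {Γ : Type*} [Group Γ] [DecidableEq Γ]

/-- The Følner condition, characterizing amenability of a countable discrete group. -/
def IsFolner (Γ : Type*) [Group Γ] [DecidableEq Γ] : Prop :=
  ∀ K : Finset Γ, ∀ ε : ℝ, 0 < ε →
    ∃ F : Finset Γ, F.Nonempty ∧ (((K * F) \ F).card : ℝ) ≤ ε * F.card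

variable {X : Type*} [TopologicalSpace X] [MulAction Γ X]

/-- `F` is an independence set for the tuple `(U₁, …, U_k)`. -/
def IsIndep {k : ℕ} (F : Finset Γ) (U : Fin k → Set X) : Prop :=
  ∀ σ : Γ → Fin k, ∃ z : X, ∀ s ∈ F, s • z ∈ U (σ s)

/-- `x = (x₁, …, x_k)` is an IE-tuple. -/
def IsIETuple {k : ℕ} (x : Fin k → X) : Prop :=
  ∀ U : Fin k → Set X, (∀ i, U i ∈ 𝓝 (x i)) →
    ∃ K : Finset Γ, K.Nonempty ∧ ∃ c : ℝ, 0 < c ∧ ∃ ε : ℝ, 0 < ε ∧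
      ∀ F : Finset Γ, (((K * F) \ F).card : ℝ) ≤ ε * F.card →
        ∃ F' : Finset Γ, F' ⊆ F ∧ c * F.card ≤ F'.card ∧ IsIndep F' U

/-- The set `IE_k(X)` of IE-tuples of length `k`. -/
def IEk (Γ : Type*) [Group Γ] [DecidableEq Γ] {X : Type*} [TopologicalSpace X]
    [MulAction Γ X] [One X] (k : ℕ) : Set (Fin k → X) :=
  {x | IsIETuple (Γ := Γ) x}

/-- The IE group `IE(X) = {x : (x, e_X) ∈ IE₂(X)}`. -/
def IE (Γ : Type*) [Group Γ] [DecidableEq Γ] (X : Type*) [TopologicalSpace X]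
    [MulAction Γ X] [One X] : Set X :=
  {x | IsIETuple (Γ := Γ) ![x, (1 : X)]}

end Stmt17

open MeasureTheory
open scoped ENNReal NNReal
set_option linter.unusedSectionVars false
set_option linter.unusedTactic false


namespace Stmt17

variable {Γ : Type*} [Group Γ] [DecidableEq Γ]
variable {X : Type*} [TopologicalSpace X] [MulAction Γ X]

lemma IsIndep.subset {k : ℕ} {F F' : Finset Γ} {U : Fin k → Set X} (h : IsIndep F U)
    (hsub : F' ⊆ F) : IsIndep F' U :=
  fun σ => (h σ).imp fun _ hz s hs => hz s (hsub hs)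

lemma IsIndep.mulRight {k : ℕ} {F : Finset Γ} {U : Fin k → Set X} (h : IsIndep F U) (g : Γ) :
    IsIndep (F.image (· * g)) U := by
  intro σ
  obtain ⟨z, hz⟩ := h (fun t => σ (t * g))
  refine ⟨g⁻¹ • z, fun r hr => ?_⟩
  obtain ⟨t, ht, rfl⟩ := Finset.mem_image.1 hr
  have h2 : (t * g) • (g⁻¹ • z) = t • z := by
    rw [smul_smul, mul_assoc, mul_inv_cancel, mul_one]
  rw [h2]
  exact hz t ht

/-- The "positive independence density over all finite subsets" property. -/
def QTuple (Γ : Type*) [Group Γ] [DecidableEq Γ] {X : Type*} [TopologicalSpace X]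
    [MulAction Γ X] {k : ℕ} (x : Fin k → X) : Prop :=
  ∀ U : Fin k → Set X, (∀ i, U i ∈ 𝓝 (x i)) →
    ∃ c : ℝ, 0 < c ∧ ∀ F : Finset Γ,
      ∃ F' : Finset Γ, F' ⊆ F ∧ c * F.card ≤ F'.card ∧ IsIndep F' U

lemma QTuple.isIETuple {k : ℕ} {x : Fin k → X} (h : QTuple Γ x) : IsIETuple (Γ := Γ) x := by
  intro U hU
  obtain ⟨c, hc, hall⟩ := h U hU
  exact ⟨{1}, Finset.singleton_nonempty 1, c, hc, 1, one_pos, fun F _ => hall F⟩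

lemma dense_indep_core {k : ℕ} [Nonempty X] (hamen : IsFolner Γ) {U : Fin k → Set X}
    (K₀ : Finset Γ) (c₀ ε₀ : ℝ) (hc₀ : 0 < c₀) (hε₀ : 0 < ε₀)
    (H : ∀ F : Finset Γ, (((K₀ * F) \ F).card : ℝ) ≤ ε₀ * F.card →
      ∃ F' : Finset Γ, F' ⊆ F ∧ c₀ * F.card ≤ F'.card ∧ IsIndep F' U)
    (F : Finset Γ) (h1F : (1:Γ) ∈ F) :
    ∃ F' : Finset Γ, F' ⊆ F ∧ (c₀/2) * F.card ≤ F'.card ∧ IsIndep F' U := by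
  classical
  set n := F.card with hn
  have hnpos : 0 < n := Finset.card_pos.2 ⟨1, h1F⟩
  have hnR : (0:ℝ) < n := by exact_mod_cast hnpos
  set δ : ℝ := min ε₀ (c₀ / (4*n)) with hδdef
  have hδ : 0 < δ := lt_min hε₀ (by positivity)
  set A : Finset Γ := insert (1:Γ) K₀ * F with hA
  obtain ⟨E, hEne, hE⟩ := hamen A δ hδ
  have hFA : F ⊆ A := by
    intro f hf
    have h := Finset.mul_mem_mul (Finset.mem_insert_self 1 K₀) hf
    simpa using h
  have hKFA : K₀ * F ⊆ A := Finset.mul_subset_mul_right (Finset.subset_insert 1 K₀)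
  have hED : E ⊆ F * E := by
    intro e he
    have h := Finset.mul_mem_mul h1F he
    simpa using h
  have hDAE : F * E ⊆ A * E := Finset.mul_subset_mul_right hFA
  have hEcard : (E.card : ℝ) ≤ (F*E).card := by exact_mod_cast Finset.card_le_card hED
  have hqual : (((K₀ * (F * E)) \ (F * E)).card : ℝ) ≤ ε₀ * (F * E).card := by
    have hsub : (K₀ * (F * E)) \ (F * E) ⊆ (A * E) \ E := by
      intro g hg
      obtain ⟨hg1, hg2⟩ := Finset.mem_sdiff.1 hg
      refine Finset.mem_sdiff.2 ⟨?_, fun hgE => hg2 (hED hgE)⟩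
      rw [← mul_assoc] at hg1
      exact Finset.mul_subset_mul_right hKFA hg1
    calc (((K₀ * (F * E)) \ (F * E)).card : ℝ) ≤ ((A * E) \ E).card := by
          exact_mod_cast Finset.card_le_card hsub
      _ ≤ δ * E.card := hE
      _ ≤ ε₀ * E.card := by
          apply mul_le_mul_of_nonneg_right (min_le_left _ _) (by positivity)
      _ ≤ ε₀ * (F*E).card := by
          apply mul_le_mul_of_nonneg_left hEcard hε₀.le
  obtain ⟨D', hD'sub, hD'card, hD'indep⟩ := H (F * E) hqual
  set G : Finset Γ := D'.filter (fun g => ∀ f ∈ F, f⁻¹ * g ∈ E) with hG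
  have hGD' : G ⊆ D' := Finset.filter_subset _ _
  -- bound on the bad set
  have hbadf : ∀ f ∈ F, (((F*E) \ (E.image (f * ·))).card : ℝ) ≤ 2 * (δ * E.card) := by
    intro f hf
    have hfAE : E.image (f * ·) ⊆ A * E := by
      intro g hg
      obtain ⟨e, he, rfl⟩ := Finset.mem_image.1 hg
      exact Finset.mul_mem_mul (hFA hf) he
    have hsub : (F*E) \ (E.image (f * ·)) ⊆ ((A*E) \ E) ∪ (E \ (E.image (f * ·))) := by
      intro g hg
      obtain ⟨hg1, hg2⟩ := Finset.mem_sdiff.1 hg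
      by_cases hgE : g ∈ E
      · exact Finset.mem_union_right _ (Finset.mem_sdiff.2 ⟨hgE, hg2⟩)
      · exact Finset.mem_union_left _ (Finset.mem_sdiff.2 ⟨hDAE hg1, hgE⟩)
    have hcomm : (E \ (E.image (f * ·))).card = ((E.image (f * ·)) \ E).card := by
      apply Finset.card_sdiff_comm
      rw [Finset.card_image_of_injective _ (mul_right_injective f)]
    have h2 : ((E.image (f * ·)) \ E).card ≤ ((A*E) \ E).card :=
      Finset.card_le_card (Finset.sdiff_subset_sdiff hfAE subset_rfl)
    calc (((F*E) \ (E.image (f * ·))).card : ℝ)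
        ≤ (((A*E) \ E) ∪ (E \ (E.image (f * ·)))).card := by
          exact_mod_cast Finset.card_le_card hsub
      _ ≤ (((A*E) \ E).card : ℝ) + (E \ (E.image (f * ·))).card := by
          exact_mod_cast Finset.card_union_le _ _
      _ ≤ δ * E.card + δ * E.card := by
          have hx1 : ((E \ (E.image (f * ·))).card : ℝ) ≤ δ * E.card := by
            rw [hcomm]
            calc (((E.image (f * ·)) \ E).card : ℝ) ≤ (((A*E) \ E).card : ℝ) := by
                  exact_mod_cast h2
              _ ≤ δ * E.card := hE
          have hx2 : (((A*E) \ E).card : ℝ) ≤ δ * E.card := hE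
          push_cast
          push_cast at hx1 hx2
          linarith
      _ = 2 * (δ * E.card) := by ring
  have hbad : ((D' \ G).card : ℝ) ≤ (c₀/2) * E.card := by
    have hsub : D' \ G ⊆ F.biUnion (fun f => (F*E) \ (E.image (f * ·))) := by
      intro g hg
      obtain ⟨hgD', hgG⟩ := Finset.mem_sdiff.1 hg
      have hnot : ¬ ∀ f ∈ F, f⁻¹ * g ∈ E := fun h => hgG (Finset.mem_filter.2 ⟨hgD', h⟩)
      push_neg at hnot
      obtain ⟨f, hf, hfg⟩ := hnot
      refine Finset.mem_biUnion.2 ⟨f, hf, Finset.mem_sdiff.2 ⟨hD'sub hgD', fun hmem => ?_⟩⟩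
      obtain ⟨e, he, rfl⟩ := Finset.mem_image.1 hmem
      rw [inv_mul_cancel_left] at hfg
      exact hfg he
    calc ((D' \ G).card : ℝ) ≤ (F.biUnion (fun f => (F*E) \ (E.image (f * ·)))).card := by
          exact_mod_cast Finset.card_le_card hsub
      _ ≤ ∑ f ∈ F, (((F*E) \ (E.image (f * ·))).card : ℝ) := by
          exact_mod_cast Finset.card_biUnion_le
      _ ≤ ∑ _f ∈ F, 2 * (δ * E.card) := Finset.sum_le_sum hbadf
      _ = n * (2 * (δ * E.card)) := by
          rw [Finset.sum_const]
          simp only [nsmul_eq_mul, hn]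
      _ ≤ n * (2 * ((c₀ / (4*n)) * E.card)) := by
          gcongr
          exact min_le_right _ _
      _ = (c₀/2) * E.card * (n / n) := by ring
      _ = (c₀/2) * E.card := by rw [div_self hnR.ne', mul_one]
  have hGcard : (c₀/2) * E.card ≤ (G.card : ℝ) := by
    have h1 : (D' \ G).card = D'.card - G.card := Finset.card_sdiff_of_subset hGD'
    have h2 : (G.card : ℝ) = (D'.card : ℝ) - (D' \ G).card := by
      rw [h1]
      have := Finset.card_le_card hGD'
      push_cast [Nat.cast_sub this]
      ring
    have h3 : c₀ * E.card ≤ (D'.card : ℝ) := by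
      calc c₀ * E.card ≤ c₀ * (F*E).card := by gcongr
        _ ≤ D'.card := hD'card
    rw [h2]
    linarith
  -- double counting
  have hcount : ∀ g ∈ G, (E.filter (fun s => g ∈ F.image (· * s))).card = n := by
    intro g hg
    have hfa : ∀ f ∈ F, f⁻¹ * g ∈ E := (Finset.mem_filter.1 hg).2
    have heq : E.filter (fun s => g ∈ F.image (· * s)) = F.image (fun f => f⁻¹ * g) := by
      ext s
      simp only [Finset.mem_filter, Finset.mem_image]
      constructor
      · rintro ⟨hsE, f, hf, rfl⟩
        exact ⟨f, hf, by group⟩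
      · rintro ⟨f, hf, rfl⟩
        exact ⟨hfa f hf, f, hf, by group⟩
    rw [heq, Finset.card_image_of_injective _ ?_, hn]
    intro a b hab
    simpa using inv_injective (mul_left_injective g hab)
  have hsum : (n : ℝ) * G.card ≤ ∑ s ∈ E, ((D' ∩ F.image (· * s)).card : ℝ) := by
    have h1 : ∑ s ∈ E, (G ∩ F.image (· * s)).card
        = ∑ g ∈ G, (E.filter (fun s => g ∈ F.image (· * s))).card := by
      have hl : ∀ s, (G ∩ F.image (· * s)).card = ∑ g ∈ G, if g ∈ F.image (· * s) then 1 else 0 := by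
        intro s
        rw [← Finset.filter_mem_eq_inter, Finset.card_filter]
      have hr : ∀ g, (E.filter (fun s => g ∈ F.image (· * s))).card
          = ∑ s ∈ E, if g ∈ F.image (· * s) then 1 else 0 := by
        intro g; rw [Finset.card_filter]
      simp only [hl, hr]
      exact Finset.sum_comm
    have h2 : ∑ g ∈ G, (E.filter (fun s => g ∈ F.image (· * s))).card = G.card * n := by
      rw [Finset.sum_congr rfl hcount, Finset.sum_const, smul_eq_mul]
    have h3 : ∀ s ∈ E, (G ∩ F.image (· * s)).card ≤ (D' ∩ F.image (· * s)).card := fun s _ =>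
      Finset.card_le_card (Finset.inter_subset_inter_right hGD')
    calc (n : ℝ) * G.card = ((∑ s ∈ E, (G ∩ F.image (· * s)).card : ℕ) : ℝ) := by
          rw [h1, h2]; push_cast; ring
      _ ≤ ∑ s ∈ E, ((D' ∩ F.image (· * s)).card : ℝ) := by
          push_cast
          exact Finset.sum_le_sum (fun s hs => by exact_mod_cast h3 s hs)
  have hpig : ∃ s ∈ E, (c₀/2) * n ≤ ((D' ∩ F.image (· * s)).card : ℝ) := by
    by_contra hcon
    push_neg at hcon
    have hlt := Finset.sum_lt_sum_of_nonempty hEne hcon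
    have : ∑ _s ∈ E, (c₀/2) * (n:ℝ) = E.card * ((c₀/2) * n) := by
      rw [Finset.sum_const, nsmul_eq_mul]
    rw [this] at hlt
    have hchain : (n:ℝ) * G.card ≥ n * ((c₀/2) * E.card) := by
      apply mul_le_mul_of_nonneg_left hGcard (by positivity)
    nlinarith [hsum]
  obtain ⟨s, hsE, hscard⟩ := hpig
  refine ⟨(D' ∩ F.image (· * s)).image (· * s⁻¹), ?_, ?_, ?_⟩
  · intro r hr
    obtain ⟨t, ht, rfl⟩ := Finset.mem_image.1 hr
    obtain ⟨f, hf, rfl⟩ := Finset.mem_image.1 (Finset.mem_inter.1 ht).2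
    simpa using hf
  · rw [Finset.card_image_of_injective _ (mul_left_injective s⁻¹)]
    calc c₀/2 * (F.card : ℝ) = c₀/2 * (n : ℝ) := by rw [hn]
      _ ≤ _ := hscard
  · exact (hD'indep.subset Finset.inter_subset_left).mulRight s⁻¹


lemma dense_indep {k : ℕ} [Nonempty X] (hamen : IsFolner Γ) {U : Fin k → Set X}
    (K₀ : Finset Γ) (c₀ ε₀ : ℝ) (hc₀ : 0 < c₀) (hε₀ : 0 < ε₀)
    (H : ∀ F : Finset Γ, (((K₀ * F) \ F).card : ℝ) ≤ ε₀ * F.card →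
      ∃ F' : Finset Γ, F' ⊆ F ∧ c₀ * F.card ≤ F'.card ∧ IsIndep F' U) :
    ∀ F : Finset Γ, ∃ F' : Finset Γ, F' ⊆ F ∧ (c₀/2) * F.card ≤ F'.card ∧ IsIndep F' U := by
  intro F
  rcases F.eq_empty_or_nonempty with rfl | ⟨f₀, hf₀⟩
  · exact ⟨∅, subset_rfl, by simp, fun σ => ⟨Classical.arbitrary X, by simp⟩⟩
  · set F1 : Finset Γ := F.image (· * f₀⁻¹) with hF1
    have h1 : (1:Γ) ∈ F1 := Finset.mem_image.2 ⟨f₀, hf₀, mul_inv_cancel f₀⟩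
    obtain ⟨F1', hsub, hcard, hind⟩ := dense_indep_core hamen K₀ c₀ ε₀ hc₀ hε₀ H F1 h1
    refine ⟨F1'.image (· * f₀), ?_, ?_, hind.mulRight f₀⟩
    · intro r hr
      obtain ⟨t, ht, rfl⟩ := Finset.mem_image.1 hr
      obtain ⟨f, hf, rfl⟩ := Finset.mem_image.1 (hsub ht)
      simpa using hf
    · rw [Finset.card_image_of_injective _ (mul_left_injective f₀)]
      have hc : F1.card = F.card := Finset.card_image_of_injective _ (mul_left_injective f₀⁻¹)
      rwa [hc] at hcard

lemma isIETuple_iff_qtuple [Nonempty X] (hamen : IsFolner Γ) {k : ℕ} {x : Fin k → X} :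
    IsIETuple (Γ := Γ) x ↔ QTuple Γ x := by
  constructor
  · intro h U hU
    obtain ⟨K, _, c, hc, ε, hε, H⟩ := h U hU
    exact ⟨c/2, by positivity, dense_indep hamen K c ε hc hε H⟩
  · exact QTuple.isIETuple

lemma QTuple.comp {k m : ℕ} {x : Fin k → X} (h : QTuple Γ x) (θ : Fin m → Fin k) :
    QTuple Γ (x ∘ θ) := by
  intro U hU
  set W : Fin k → Set X := fun l => ⋂ j : {j : Fin m // θ j = l}, U j.1 with hW
  have hWnb : ∀ l, W l ∈ 𝓝 (x l) := by
    intro l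
    rw [hW]
    refine Filter.iInter_mem.2 ?_
    rintro ⟨j, rfl⟩
    exact hU j
  obtain ⟨c, hc, hall⟩ := h W hWnb
  refine ⟨c, hc, fun F => ?_⟩
  obtain ⟨F', h1, h2, h3⟩ := hall F
  refine ⟨F', h1, h2, fun σ => ?_⟩
  obtain ⟨z, hz⟩ := h3 (θ ∘ σ)
  refine ⟨z, fun s hs => ?_⟩
  exact Set.iInter_subset (fun j : {j : Fin m // θ j = θ (σ s)} => U j.1) ⟨σ s, rfl⟩ (hz s hs)

lemma QTuple.smulQ (hcont : ∀ s : Γ, Continuous fun x : X => s • x) {k : ℕ} {x : Fin k → X}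
    (hx : QTuple Γ x) (s : Γ) : QTuple Γ (fun i => s • x i) := by
  intro U hU
  have hU' : ∀ i, (fun w : X => s • w) ⁻¹' (U i) ∈ 𝓝 (x i) := fun i =>
    (hcont s).continuousAt.preimage_mem_nhds (hU i)
  obtain ⟨c, hc, hall⟩ := hx _ hU'
  refine ⟨c, hc, fun F => ?_⟩
  obtain ⟨F', h1, h2, h3⟩ := hall (F.image (fun t => s⁻¹ * t))
  refine ⟨F'.image (fun t => s * t), ?_, ?_, ?_⟩
  · intro r hr
    obtain ⟨t, ht, rfl⟩ := Finset.mem_image.1 hr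
    obtain ⟨u, hu, rfl⟩ := Finset.mem_image.1 (h1 ht)
    simpa using hu
  · rw [Finset.card_image_of_injective _ (mul_right_injective s)]
    have hc2 : (F.image (fun t => s⁻¹ * t)).card = F.card :=
      Finset.card_image_of_injective _ (mul_right_injective s⁻¹)
    rwa [hc2] at h2
  · intro σ
    obtain ⟨z, hz⟩ := h3 (fun t => σ (s * t))
    refine ⟨z, fun r hr => ?_⟩
    obtain ⟨t, ht, rfl⟩ := Finset.mem_image.1 hr
    have := hz t ht
    rw [mul_smul]
    exact this

end Stmt17

namespace Stmt17

lemma exists_good_point {Γ : Type*} [Group Γ] {X : Type*} [Group X] [TopologicalSpace X]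
    [IsTopologicalGroup X] [CompactSpace X] [TopologicalSpace.MetrizableSpace X]
    [MulDistribMulAction Γ X] (hcont : ∀ s : Γ, Continuous fun x : X => s • x)
    {V : Set X} (hV : IsOpen V) (hne : V.Nonempty) :
    ∃ c : ℝ, 0 < c ∧ ∀ F : Finset Γ,
      ∃ z : X, ∃ F' ⊆ F, c * F.card ≤ (F'.card : ℝ) ∧ ∀ s ∈ F', s • z ∈ V := by
  classical
  borelize X
  letI := TopologicalSpace.metrizableSpaceMetric X
  haveI : SecondCountableTopology X := inferInstance
  set μ : Measure X := Measure.haarMeasure (⊤ : TopologicalSpace.PositiveCompacts X) with hμ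
  haveI : IsProbabilityMeasure μ := ⟨by
    rw [← TopologicalSpace.PositiveCompacts.coe_top (α := X)]
    exact Measure.haarMeasure_self⟩
  have hinv : ∀ s : Γ, μ ((fun z : X => s • z) ⁻¹' V) = μ V := by
    intro s
    set e : X ≃* X := MulDistribMulAction.toMulEquiv X s with he
    have hc : Continuous e := hcont s
    have hcs : Continuous e.symm := hcont s⁻¹
    haveI : Measure.IsHaarMeasure (Measure.map e μ) := e.isHaarMeasure_map μ hc hcs
    haveI : IsProbabilityMeasure (Measure.map e μ) :=
      Measure.isProbabilityMeasure_map hc.measurable.aemeasurable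
    have h1 : Measure.map e μ = μ := by
      have huniq := Measure.haarMeasure_unique (G := X) (Measure.map e μ)
        (⊤ : TopologicalSpace.PositiveCompacts X)
      have htop : (Measure.map e μ) (⊤ : TopologicalSpace.PositiveCompacts X) = 1 := by
        rw [TopologicalSpace.PositiveCompacts.coe_top]
        simp [measure_univ]
      rw [huniq, htop, one_smul, hμ]
    calc μ ((fun z : X => s • z) ⁻¹' V) = (Measure.map e μ) V := by
          rw [Measure.map_apply hc.measurable hV.measurableSet]; rfl
      _ = μ V := by rw [h1]
  have ha0 : μ V ≠ 0 := (hV.measure_pos μ hne).ne'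
  have hat : μ V ≠ ⊤ := measure_ne_top μ V
  refine ⟨(μ V).toReal, ENNReal.toReal_pos ha0 hat, ?_⟩
  intro F
  rcases F.eq_empty_or_nonempty with rfl | hFne
  · exact ⟨1, ∅, by simp⟩
  by_contra hcon
  push_neg at hcon
  set c : ℝ := (μ V).toReal with hc
  set x : ℝ := c * F.card with hx
  have hxpos : 0 < x := by
    apply mul_pos (ENNReal.toReal_pos ha0 hat)
    exact_mod_cast Finset.card_pos.2 hFne
  set g : X → ℕ := fun z => (F.filter (fun s => s • z ∈ V)).card with hg
  have hgb : ∀ z, (g z : ℝ) < x := by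
    intro z
    have := hcon z (F.filter (fun s => s • z ∈ V)) (Finset.filter_subset _ _)
    by_contra h
    push_neg at h
    obtain ⟨t, ht, hnt⟩ := this h
    exact hnt (Finset.mem_filter.1 ht).2
  set b : ℕ := ⌈x⌉₊ - 1 with hb
  have hgb' : ∀ z, g z ≤ b := by
    intro z
    have h1 : g z < ⌈x⌉₊ := Nat.lt_ceil.2 (hgb z)
    omega
  have hbx : (b : ℝ) < x := by
    have h1 : (1 : ℕ) ≤ ⌈x⌉₊ := Nat.one_le_ceil_iff.2 hxpos
    have h2 : (⌈x⌉₊ : ℝ) < x + 1 := Nat.ceil_lt_add_one hxpos.le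
    have : (b : ℝ) = (⌈x⌉₊ : ℝ) - 1 := by
      rw [hb]
      push_cast [h1]
      ring
    linarith
  -- integral computation
  have hmeasV : ∀ s : Γ, MeasurableSet ((fun z : X => s • z) ⁻¹' V) := fun s =>
    (hcont s).measurable hV.measurableSet
  have hkey : (F.card : ℝ≥0∞) * μ V = ∫⁻ z, (g z : ℝ≥0∞) ∂μ := by
    have h1 : ∀ z : X, (g z : ℝ≥0∞) =
        ∑ s ∈ F, Set.indicator ((fun z : X => s • z) ⁻¹' V) (fun _ => (1:ℝ≥0∞)) z := by
      intro z
      rw [hg]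
      simp only [Set.indicator_apply, Set.mem_preimage]
      rw [Finset.card_filter]
      push_cast
      rfl
    calc (F.card : ℝ≥0∞) * μ V = ∑ s ∈ F, μ ((fun z : X => s • z) ⁻¹' V) := by
          simp [hinv, Finset.sum_const, nsmul_eq_mul]
      _ = ∑ s ∈ F, ∫⁻ z, Set.indicator ((fun z : X => s • z) ⁻¹' V) (fun _ => (1:ℝ≥0∞)) z ∂μ := by
          refine Finset.sum_congr rfl fun s _ => ?_
          exact (MeasureTheory.lintegral_indicator_one (hmeasV s)).symm
      _ = ∫⁻ z, ∑ s ∈ F, Set.indicator ((fun z : X => s • z) ⁻¹' V) (fun _ => (1:ℝ≥0∞)) z ∂μ := by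
          rw [MeasureTheory.lintegral_finset_sum]
          intro s _
          exact (measurable_const.indicator (hmeasV s))
      _ = ∫⁻ z, (g z : ℝ≥0∞) ∂μ := by
          refine lintegral_congr fun z => (h1 z).symm
  have hle : (F.card : ℝ≥0∞) * μ V ≤ (b : ℝ≥0∞) := by
    rw [hkey]
    calc ∫⁻ z, (g z : ℝ≥0∞) ∂μ ≤ ∫⁻ _, (b : ℝ≥0∞) ∂μ :=
          lintegral_mono fun z => by exact (Nat.cast_le (α := ℝ≥0∞)).2 (hgb' z)
      _ = (b : ℝ≥0∞) := by simp [measure_univ]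
  have hle' : x ≤ (b : ℝ) := by
    have := ENNReal.toReal_mono (by simp) hle
    rw [ENNReal.toReal_mul] at this
    simpa [hx, hc, mul_comm] using this
  linarith

section GroupSide

variable {Γ : Type*} [Group Γ] [DecidableEq Γ]
variable {X : Type*} [Group X] [TopologicalSpace X] [IsTopologicalGroup X] [CompactSpace X]
  [TopologicalSpace.MetrizableSpace X] [MulDistribMulAction Γ X]

lemma qtuple_diag (hcont : ∀ s : Γ, Continuous fun x : X => s • x) (y : X) (k : ℕ) :
    QTuple Γ (fun _ : Fin k => y) := by
  intro U hU
  set V : Set X := ⋂ i, interior (U i) with hV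
  have hVo : IsOpen V := isOpen_iInter_of_finite fun i => isOpen_interior
  have hVy : y ∈ V := Set.mem_iInter.2 fun i => mem_interior_iff_mem_nhds.2 (hU i)
  obtain ⟨c, hc, hall⟩ := exists_good_point hcont hVo ⟨y, hVy⟩
  refine ⟨c, hc, fun F => ?_⟩
  obtain ⟨z, F', hsub, hcard, hz⟩ := hall F
  exact ⟨F', hsub, hcard, fun σ =>
    ⟨z, fun s hs => interior_subset (Set.mem_iInter.1 (hz s hs) (σ s))⟩⟩

lemma QTuple.mulQ {k : ℕ} {x y : Fin k → X} (hx : QTuple Γ x) (hy : QTuple Γ y) :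
    QTuple Γ (x * y) := by
  intro W hW
  have hUV : ∀ i, ∃ U ∈ 𝓝 (x i), ∃ V ∈ 𝓝 (y i), ∀ u ∈ U, ∀ v ∈ V, u * v ∈ W i := by
    intro i
    have hc : ContinuousAt (fun p : X × X => p.1 * p.2) (x i, y i) := continuous_mul.continuousAt
    have hpre : (fun p : X × X => p.1 * p.2) ⁻¹' (W i) ∈ 𝓝 (x i, y i) :=
      hc.preimage_mem_nhds (hW i)
    obtain ⟨U, hU, V, hV, hUV⟩ := mem_nhds_prod_iff.1 hpre
    exact ⟨U, hU, V, hV, fun u hu v hv => hUV (Set.mk_mem_prod hu hv)⟩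
  choose U hU V hV hprod using hUV
  obtain ⟨c1, hc1, h1⟩ := hx U hU
  obtain ⟨c2, hc2, h2⟩ := hy V hV
  refine ⟨c1 * c2, mul_pos hc1 hc2, fun F => ?_⟩
  obtain ⟨F1, hs1, hcard1, hind1⟩ := h1 F
  obtain ⟨F2, hs2, hcard2, hind2⟩ := h2 F1
  refine ⟨F2, hs2.trans hs1, ?_, ?_⟩
  · calc c1 * c2 * F.card = c2 * (c1 * F.card) := by ring
      _ ≤ c2 * F1.card := mul_le_mul_of_nonneg_left hcard1 hc2.le
      _ ≤ F2.card := hcard2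
  · intro σ
    obtain ⟨zu, hzu⟩ := (hind1.subset hs2) σ
    obtain ⟨zv, hzv⟩ := hind2 σ
    refine ⟨zu * zv, fun s hs => ?_⟩
    rw [smul_mul']
    exact hprod (σ s) _ (hzu s hs) _ (hzv s hs)

lemma QTuple.invQ {k : ℕ} {x : Fin k → X} (hx : QTuple Γ x) : QTuple Γ x⁻¹ := by
  intro U hU
  have hU' : ∀ i, (fun w : X => w⁻¹) ⁻¹' (U i) ∈ 𝓝 (x i) := by
    intro i
    exact continuous_inv.continuousAt.preimage_mem_nhds (by simpa using hU i)
  obtain ⟨c, hc, hall⟩ := hx _ hU'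
  refine ⟨c, hc, fun F => ?_⟩
  obtain ⟨F', h1, h2, h3⟩ := hall F
  refine ⟨F', h1, h2, fun σ => ?_⟩
  obtain ⟨z, hz⟩ := h3 σ
  refine ⟨z⁻¹, fun s hs => ?_⟩
  rw [smul_inv']
  exact hz s hs

end GroupSide

lemma isClosed_iek {Γ : Type*} [Group Γ] [DecidableEq Γ] {X : Type*} [TopologicalSpace X]
    [MulAction Γ X] [One X] (k : ℕ) : IsClosed (IEk Γ (X := X) k) := by
  rw [← closure_subset_iff_isClosed]
  intro x hx
  intro U hU
  set o : Set (Fin k → X) := Set.univ.pi fun i => interior (U i) with ho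
  have hop : IsOpen o := isOpen_set_pi Set.finite_univ (fun i _ => isOpen_interior)
  have hxo : x ∈ o := fun i _ => mem_interior_iff_mem_nhds.2 (hU i)
  obtain ⟨y, hyo, hyIE⟩ := mem_closure_iff.1 hx o hop hxo
  exact hyIE U (fun i => mem_nhds_iff.2 ⟨interior (U i), interior_subset, isOpen_interior,
    hyo i (Set.mem_univ i)⟩)

end Stmt17

open Stmt17 in
theorem stmt17 {Γ : Type*} [Group Γ] [Countable Γ] [DecidableEq Γ]
    {X : Type*} [Group X] [TopologicalSpace X] [IsTopologicalGroup X] [CompactSpace X]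
    [TopologicalSpace.MetrizableSpace X]
    [MulDistribMulAction Γ X]
    (hamen : IsFolner Γ)
    (hcont : ∀ s : Γ, Continuous fun x : X => s • x) :
    -- (1) `IE(X)` is a closed `Γ`-invariant normal subgroup of `X`
    (IsClosed (IE Γ X) ∧
      (∀ (s : Γ), ∀ x ∈ IE Γ X, s • x ∈ IE Γ X) ∧
      (1 : X) ∈ IE Γ X ∧
      (∀ x ∈ IE Γ X, x⁻¹ ∈ IE Γ X) ∧
      (∀ x ∈ IE Γ X, ∀ y ∈ IE Γ X, x * y ∈ IE Γ X) ∧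
      (∀ x ∈ IE Γ X, ∀ g : X, g * x * g⁻¹ ∈ IE Γ X)) ∧
    -- (2) for every `k ∈ ℕ`, `IE_k(X)` is a closed `Γ`-invariant subgroup of `X^k`
    -- (product action), and the two product descriptions hold
    (∀ k : ℕ,
      IsClosed (IEk Γ (X := X) k) ∧
      (∀ (s : Γ), ∀ x ∈ IEk Γ (X := X) k, (fun i => s • x i) ∈ IEk Γ (X := X) k) ∧
      (1 : Fin k → X) ∈ IEk Γ (X := X) k ∧
      (∀ x ∈ IEk Γ (X := X) k, x⁻¹ ∈ IEk Γ (X := X) k) ∧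
      (∀ x ∈ IEk Γ (X := X) k, ∀ y ∈ IEk Γ (X := X) k, x * y ∈ IEk Γ (X := X) k) ∧
      IEk Γ (X := X) k =
        {z | ∃ (x : Fin k → X) (y : X), (∀ i, x i ∈ IE Γ X) ∧ z = fun i => x i * y} ∧
      IEk Γ (X := X) k =
        {z | ∃ (x : Fin k → X) (y : X), (∀ i, x i ∈ IE Γ X) ∧ z = fun i => y * x i}) := by
  haveI : Nonempty X := ⟨1⟩
  have hQ : ∀ (k : ℕ) (x : Fin k → X), x ∈ IEk Γ (X := X) k ↔ QTuple Γ x :=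
    fun k x => isIETuple_iff_qtuple hamen
  have hIEQ : ∀ w : X, w ∈ IE Γ X ↔ QTuple Γ ![w, (1:X)] :=
    fun w => isIETuple_iff_qtuple hamen
  have hdiag : ∀ (k : ℕ) (y : X), QTuple Γ (fun _ : Fin k => y) := fun k y => qtuple_diag hcont y k
  -- tuple with all coordinates in IE is a QTuple
  have hsingle : ∀ (k : ℕ) (j : Fin k) (w : X), w ∈ IE Γ X →
      QTuple Γ (fun i : Fin k => if i = j then w else 1) := by
    intro k j w hw
    have h2 := ((hIEQ w).1 hw).comp (fun i : Fin k => if i = j then (0 : Fin 2) else 1)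
    have heq2 : (![w, (1:X)] ∘ fun i : Fin k => if i = j then (0 : Fin 2) else 1)
        = fun i => if i = j then w else 1 := by
      funext i
      by_cases h : i = j <;> simp [h, Function.comp]
    rwa [heq2] at h2
  have htup : ∀ (k : ℕ) (x : Fin k → X), (∀ i, x i ∈ IE Γ X) → QTuple Γ (fun i => x i) := by
    intro k x hx
    have hstep : ∀ m : ℕ, QTuple Γ (fun i : Fin k => if (i : ℕ) < m then x i else 1) := by
      intro m
      induction m with
      | zero =>
        have heq : (fun i : Fin k => if (i : ℕ) < 0 then x i else 1)
            = fun _ : Fin k => (1:X) := by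
          funext i; simp
        rw [heq]; exact hdiag k 1
      | succ m ih =>
        by_cases hm : m < k
        · set jm : Fin k := ⟨m, hm⟩
          have h1 := QTuple.mulQ ih (hsingle k jm (x jm) (hx jm))
          have heq : ((fun i : Fin k => if (i : ℕ) < m then x i else 1)
              * fun i : Fin k => if i = jm then x jm else 1)
              = fun i : Fin k => if (i : ℕ) < m + 1 then x i else 1 := by
            funext i
            show (if (i : ℕ) < m then x i else 1) * (if i = jm then x jm else 1) = _
            rcases lt_trichotomy (i : ℕ) m with h | h | h
            · have hne : i ≠ jm := by
                intro hij; rw [hij] at h; exact absurd h (lt_irrefl m)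
              simp [h, hne, Nat.lt_succ_of_lt h]
            · have hij : i = jm := Fin.ext h
              simp [hij, h, Nat.lt_irrefl, jm]
            · have h1' : ¬ (i : ℕ) < m := Nat.lt_asymm h
              have h2' : ¬ (i : ℕ) < m + 1 := Nat.lt_of_lt_of_le h (le_refl _) |> fun hh => by omega
              have hne : i ≠ jm := by
                intro hij; rw [hij] at h; exact absurd h (lt_irrefl m)
              simp [h1', h2', hne]
          rwa [heq] at h1
        · have heq : (fun i : Fin k => if (i : ℕ) < m + 1 then x i else 1)
              = fun i : Fin k => if (i : ℕ) < m then x i else 1 := by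
            funext i
            have h1' : (i : ℕ) < m := lt_of_lt_of_le i.isLt (le_of_not_gt hm)
            simp [h1', Nat.lt_succ_of_lt h1']
          rw [heq]; exact ih
    have heq : (fun i : Fin k => x i) = fun i : Fin k => if (i : ℕ) < k then x i else 1 := by
      funext i; simp [i.isLt]
    rw [heq]; exact hstep k
  constructor
  · -- part (1)
    refine ⟨?_, ?_, ?_, ?_, ?_, ?_⟩
    · -- closed
      have hcontpair : Continuous (fun w : X => ![w, (1:X)]) := by
        apply continuous_pi
        intro i
        fin_cases i
        · simpa using continuous_id'
        · simpa using continuous_const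
      have heq : IE Γ X = (fun w : X => ![w, (1:X)]) ⁻¹' (IEk Γ (X := X) 2) := rfl
      rw [heq]
      exact (isClosed_iek 2).preimage hcontpair
    · -- invariance
      intro s x hx
      apply (hIEQ _).2
      have h1 := QTuple.smulQ hcont ((hIEQ x).1 hx) s
      have heq : (fun i => s • (![x, (1:X)] i)) = ![s • x, (1:X)] := by
        funext l
        fin_cases l <;> simp [smul_one]
      rwa [heq] at h1
    · -- 1 ∈ IE
      apply (hIEQ _).2
      have heq : (![(1:X), (1:X)]) = fun _ : Fin 2 => (1:X) := by
        funext l; fin_cases l <;> simp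
      rw [heq]
      exact hdiag 2 1
    · -- inverses
      intro x hx
      apply (hIEQ _).2
      have h1 := QTuple.invQ ((hIEQ x).1 hx)
      have heq : (![x, (1:X)])⁻¹ = ![x⁻¹, (1:X)] := by
        funext l; fin_cases l <;> simp
      rwa [heq] at h1
    · -- products
      intro x hx y hy
      apply (hIEQ _).2
      have h1 := QTuple.mulQ ((hIEQ x).1 hx) ((hIEQ y).1 hy)
      have heq : (![x, (1:X)] * ![y, (1:X)]) = ![x * y, (1:X)] := by
        funext l; fin_cases l <;> simp
      rwa [heq] at h1
    · -- conjugation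
      intro x hx g
      apply (hIEQ _).2
      have h1 := QTuple.mulQ (QTuple.mulQ (hdiag 2 g) ((hIEQ x).1 hx)) (hdiag 2 g⁻¹)
      have heq : (((fun _ : Fin 2 => g) * ![x, (1:X)]) * fun _ : Fin 2 => g⁻¹)
          = ![g * x * g⁻¹, (1:X)] := by
        funext l; fin_cases l <;> simp
      rwa [heq] at h1
  · -- part (2)
    intro k
    refine ⟨isClosed_iek k, ?_, ?_, ?_, ?_, ?_, ?_⟩
    · intro s x hx
      exact (hQ k _).2 (QTuple.smulQ hcont ((hQ k x).1 hx) s)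
    · exact (hQ k _).2 (hdiag k 1)
    · intro x hx
      exact (hQ k _).2 (QTuple.invQ ((hQ k x).1 hx))
    · intro x hx y hy
      exact (hQ k _).2 (QTuple.mulQ ((hQ k x).1 hx) ((hQ k y).1 hy))
    · -- first product description
      ext z
      simp only [Set.mem_setOf_eq]
      constructor
      · intro hz
        rcases Nat.eq_zero_or_pos k with hk | hk
        · subst hk
          exact ⟨z, 1, fun i => i.elim0, by funext i; exact i.elim0⟩
        · set i₀ : Fin k := ⟨0, hk⟩
          have hzQ := (hQ k z).1 hz
          refine ⟨fun i => z i * (z i₀)⁻¹, z i₀, ?_, ?_⟩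
          · intro i
            apply (hIEQ _).2
            have hp := hzQ.comp ![i, i₀]
            have h1 := QTuple.mulQ hp (hdiag 2 (z i₀)⁻¹)
            have heq : ((z ∘ ![i, i₀]) * fun _ : Fin 2 => (z i₀)⁻¹)
                = ![z i * (z i₀)⁻¹, (1:X)] := by
              funext l; fin_cases l <;> simp [Function.comp]
            rwa [heq] at h1
          · funext i; simp
      · rintro ⟨x, y, hx, rfl⟩
        exact (hQ k _).2 (QTuple.mulQ (htup k x hx) (hdiag k y))
    · -- second product description
      ext z
      simp only [Set.mem_setOf_eq]
      constructor
      · intro hz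
        rcases Nat.eq_zero_or_pos k with hk | hk
        · subst hk
          exact ⟨z, 1, fun i => i.elim0, by funext i; exact i.elim0⟩
        · set i₀ : Fin k := ⟨0, hk⟩
          have hzQ := (hQ k z).1 hz
          refine ⟨fun i => (z i₀)⁻¹ * z i, z i₀, ?_, ?_⟩
          · intro i
            apply (hIEQ _).2
            have hp := hzQ.comp ![i, i₀]
            have h1 := QTuple.mulQ (hdiag 2 (z i₀)⁻¹) hp
            have heq : ((fun _ : Fin 2 => (z i₀)⁻¹) * (z ∘ ![i, i₀]))
                = ![(z i₀)⁻¹ * z i, (1:X)] := by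
              funext l; fin_cases l <;> simp [Function.comp]
            rwa [heq] at h1
          · funext i; simp
      · rintro ⟨x, y, hx, rfl⟩
        exact (hQ k _).2 (QTuple.mulQ (hdiag k y) (htup k x hx))
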